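/- For an n-qudit Hermitian matrix ρ with Bloch coefficients x_{μ₁…μ_n}, and Θ the generalized conjugation sending σ_0 ↦ σ_0 and σ_j ↦ −σ_j (j ≥ 1) in each factor, one has d^n Tr(ρ Θ^{⊗n}(ρ)) = Σ_k (−1)^k L_k, where L_k is the sum of squared Bloch coefficients with exactly k space-like indices. Consequently (−1)^n d^n Tr(ρ Θ^{⊗n}(ρ)) = d^n Tr(ρ²) − 2 Σ over L_j with (n−j) odd. -/

import Mathlib

open Matrix Finset

lemma trace_mul_basis {d n : ℕ} (σ : Fin (d ^ 2) → Matrix (Fin d) (Fin d) ℂ)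
    (horth : ∀ μ ν, (σ μ * σ ν).trace = if μ = ν then (d : ℂ) else 0)
    (μ ν : Fin n → Fin (d ^ 2)) :
    ((Matrix.of (fun a b : Fin n → Fin d => ∏ i : Fin n, σ (μ i) (a i) (b i)) *
      Matrix.of (fun a b : Fin n → Fin d => ∏ i : Fin n, σ (ν i) (a i) (b i))).trace)
      = if μ = ν then (d : ℂ) ^ n else 0 := by
  have h1 : ((Matrix.of (fun a b : Fin n → Fin d => ∏ i : Fin n, σ (μ i) (a i) (b i)) *
      Matrix.of (fun a b : Fin n → Fin d => ∏ i : Fin n, σ (ν i) (a i) (b i))).trace)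
      = ∑ a : Fin n → Fin d, ∑ b : Fin n → Fin d,
          ∏ i : Fin n, (σ (μ i) (a i) (b i) * σ (ν i) (b i) (a i)) := by
    simp [Matrix.trace, Matrix.mul_apply, Matrix.diag, Finset.prod_mul_distrib,
      Finset.mul_sum]
  rw [h1]
  have h2 : ∀ a : Fin n → Fin d, ∑ b : Fin n → Fin d,
      ∏ i : Fin n, (σ (μ i) (a i) (b i) * σ (ν i) (b i) (a i))
      = ∏ i : Fin n, (σ (μ i) * σ (ν i)) (a i) (a i) := by
    intro a
    rw [← Fintype.prod_sum (fun i j => σ (μ i) (a i) j * σ (ν i) j (a i))]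
    simp [Matrix.mul_apply]
  simp_rw [h2]
  rw [← Fintype.prod_sum (fun i j => (σ (μ i) * σ (ν i)) j j)]
  have h3 : ∀ i : Fin n, ∑ j : Fin d, (σ (μ i) * σ (ν i)) j j
      = if μ i = ν i then (d : ℂ) else 0 := fun i => horth (μ i) (ν i)
  simp_rw [h3]
  by_cases h : μ = ν
  · simp [h]
  · simp only [h, if_false]
    obtain ⟨i, hi⟩ := Function.ne_iff.mp h
    exact Finset.prod_eq_zero (Finset.mem_univ i) (by simp [hi])

open Matrix Finset

lemma trace_form {d n : ℕ} [NeZero d] (σ : Fin (d ^ 2) → Matrix (Fin d) (Fin d) ℂ)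
    (horth : ∀ μ ν, (σ μ * σ ν).trace = if μ = ν then (d : ℂ) else 0)
    (c c' : (Fin n → Fin (d ^ 2)) → ℂ) :
    ((d : ℂ) ^ n) * (((((d : ℂ) ^ n)⁻¹ • ∑ μ : Fin n → Fin (d ^ 2), c μ •
        Matrix.of (fun a b : Fin n → Fin d => ∏ i : Fin n, σ (μ i) (a i) (b i))) *
      (((d : ℂ) ^ n)⁻¹ • ∑ ν : Fin n → Fin (d ^ 2), c' ν •
        Matrix.of (fun a b : Fin n → Fin d => ∏ i : Fin n, σ (ν i) (a i) (b i)))).trace)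
      = ∑ μ : Fin n → Fin (d ^ 2), c μ * c' μ := by
  have hd : (d : ℂ) ^ n ≠ 0 := pow_ne_zero _ (Nat.cast_ne_zero.mpr (NeZero.ne d))
  rw [Matrix.smul_mul, Matrix.mul_smul, Finset.sum_mul_sum]
  simp only [smul_smul, Matrix.trace_smul, Matrix.trace_sum, smul_mul_assoc,
    mul_smul_comm, smul_eq_mul, trace_mul_basis σ horth, mul_ite, mul_zero,
    Finset.sum_ite_eq', Finset.mem_univ, if_true]
  field_simp
  ring_nf
  simp only [Finset.sum_ite_eq, Finset.mem_univ, if_true]; rw [Finset.mul_sum]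
  exact Finset.sum_congr rfl fun μ _ => by ring

/-- for an n-qudit Hermitian matrix with Bloch coefficients `x`, and the
generalized conjugation `Θ` acting as `σ_0 ↦ σ_0`, `σ_j ↦ −σ_j` in each tensor factor,
`d^n Tr(ρ Θ^{⊗n}(ρ)) = Σ_k (−1)^k L_k`, and consequently
`(−1)^n d^n Tr(ρ Θ^{⊗n}(ρ)) = d^n Tr(ρ²) − 2 Σ_{j : n−j odd} L_j`. -/
theorem n_qudit_lorentz_norm_bloch (d n : ℕ) [NeZero d]
    (σ : Fin (d ^ 2) → Matrix (Fin d) (Fin d) ℂ)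
    (hσ0 : σ 0 = 1)
    (hherm : ∀ μ, (σ μ).IsHermitian)
    (htraceless : ∀ j, j ≠ 0 → (σ j).trace = 0)
    (horth : ∀ μ ν, (σ μ * σ ν).trace = if μ = ν then (d : ℂ) else 0)
    (x : (Fin n → Fin (d ^ 2)) → ℝ)
    (ρ Θρ : Matrix (Fin n → Fin d) (Fin n → Fin d) ℂ)
    (hρ : ρ = ((d : ℂ) ^ n)⁻¹ • ∑ μ : Fin n → Fin (d ^ 2), (x μ : ℂ) •
      Matrix.of (fun a b : Fin n → Fin d => ∏ i : Fin n, σ (μ i) (a i) (b i)))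
    (hΘρ : Θρ = ((d : ℂ) ^ n)⁻¹ • ∑ μ : Fin n → Fin (d ^ 2),
      (((-1 : ℂ) ^ (Finset.univ.filter fun i => μ i ≠ 0).card) * (x μ : ℂ)) •
      Matrix.of (fun a b : Fin n → Fin d => ∏ i : Fin n, σ (μ i) (a i) (b i)))
    (L : ℕ → ℝ)
    (hL : ∀ k, L k = ∑ μ ∈ Finset.univ.filter
        (fun μ : Fin n → Fin (d ^ 2) => (Finset.univ.filter fun i => μ i ≠ 0).card = k),
      x μ ^ 2) :
    ((d : ℂ) ^ n) * (ρ * Θρ).trace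
        = ∑ k ∈ Finset.range (n + 1), (-1 : ℂ) ^ k * (L k : ℂ) ∧
    ((-1 : ℂ) ^ n) * ((d : ℂ) ^ n) * (ρ * Θρ).trace
        = ((d : ℂ) ^ n) * (ρ * ρ).trace -
          2 * ∑ j ∈ (Finset.range (n + 1)).filter (fun j => Odd (n - j)), (L j : ℂ) := by
  have key1 : ((d : ℂ) ^ n) * (ρ * Θρ).trace = ∑ μ : Fin n → Fin (d ^ 2),
      (x μ : ℂ) * (((-1 : ℂ) ^ (Finset.univ.filter fun i => μ i ≠ 0).card) * (x μ : ℂ)) := by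
    rw [hρ, hΘρ]; exact trace_form σ horth _ _
  have key2 : ((d : ℂ) ^ n) * (ρ * ρ).trace = ∑ μ : Fin n → Fin (d ^ 2),
      (x μ : ℂ) * (x μ : ℂ) := by
    rw [hρ]; exact trace_form σ horth _ _
  have hLc : ∀ k, (L k : ℂ) = ∑ μ ∈ Finset.univ.filter
      (fun μ : Fin n → Fin (d ^ 2) => (Finset.univ.filter fun i => μ i ≠ 0).card = k),
      (x μ : ℂ) ^ 2 := by
    intro k; rw [hL k]; push_cast; rfl
  have hmaps : ∀ μ : Fin n → Fin (d ^ 2), μ ∈ (Finset.univ : Finset _) →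
      (Finset.univ.filter fun i => μ i ≠ 0).card ∈ Finset.range (n + 1) := by
    intro μ _
    rw [Finset.mem_range, Nat.lt_succ_iff]
    exact (Finset.card_filter_le _ _).trans (by simp)
  have h1 : ((d : ℂ) ^ n) * (ρ * Θρ).trace
      = ∑ k ∈ Finset.range (n + 1), (-1 : ℂ) ^ k * (L k : ℂ) := by
    rw [key1, ← Finset.sum_fiberwise_of_maps_to hmaps]
    refine Finset.sum_congr rfl fun k hk => ?_
    rw [hLc k, Finset.mul_sum]
    refine Finset.sum_congr rfl fun μ hμ => ?_
    rw [(Finset.mem_filter.mp hμ).2]; ring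
  refine ⟨h1, ?_⟩
  have h2 : ((d : ℂ) ^ n) * (ρ * ρ).trace = ∑ k ∈ Finset.range (n + 1), (L k : ℂ) := by
    rw [key2, ← Finset.sum_fiberwise_of_maps_to hmaps]
    refine Finset.sum_congr rfl fun k hk => ?_
    rw [hLc k]
    exact Finset.sum_congr rfl fun μ _ => by ring
  rw [h2, mul_assoc, h1, Finset.mul_sum, Finset.sum_filter, Finset.mul_sum,
    ← Finset.sum_sub_distrib]
  refine Finset.sum_congr rfl fun k hk => ?_
  have hk' : k ≤ n := Nat.lt_succ_iff.mp (Finset.mem_range.mp hk)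
  have hpow : (-1 : ℂ) ^ n * (-1 : ℂ) ^ k = (-1 : ℂ) ^ (n - k) := by
    rw [← pow_add]
    have h : n + k = (n - k) + 2 * k := by omega
    rw [h, pow_add, pow_mul]; simp
  by_cases ho : Odd (n - k)
  · simp only [ho, if_true]
    rw [← mul_assoc, hpow, Odd.neg_one_pow ho]; ring
  · simp only [ho, if_false]
    rw [← mul_assoc, hpow, Even.neg_one_pow (Nat.not_odd_iff_even.mp ho)]; ring
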